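/- In a cocommutative post-Hopf algebra, the subadjacent antipode satisfies the recursion S▷(x) = S▷(x₁) ▷ S(x₂) for all x in H. -/

import Mathlib

/-!
Post-Hopf algebras (Li–Sheng–Tang). We work over a commutative ring `R`.
`Coalgebra.comul (A := H ⊗[R] H)` refers to the standard coalgebra structure
on the tensor product, so that `comul_rhd`/`counit_rhd` say exactly that
`▷ : H ⊗ H → H` is a coalgebra homomorphism.  Sweedler sums such as
`(x₁ ▷ y)·(x₂ ▷ z)` are expressed by applying suitable linear maps to
`Coalgebra.comul x`.
-/

open TensorProduct Coalgebra LinearMap HopfAlgebra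

variable (R H : Type*) [CommRing R] [Ring H] [HopfAlgebra R H]

/-- The subadjacent product `x *▷ y = x₁ · (x₂ ▷ y)` as a linear map
`H ⊗ H → H`, built from a binary operation `rhd : H ⊗ H →ₗ H`. -/
noncomputable def subProd (rhd : H ⊗[R] H →ₗ[R] H) : H ⊗[R] H →ₗ[R] H :=
  LinearMap.mul' R H ∘ₗ TensorProduct.map LinearMap.id rhd
    ∘ₗ (TensorProduct.assoc R H H H).toLinearMap
    ∘ₗ TensorProduct.map Coalgebra.comul LinearMap.id

/-- Convolution product on `Hom(H, End(H))`: `(f * g)(x) = f(x₁) ∘ g(x₂)`. -/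
noncomputable def convEnd (f g : H →ₗ[R] Module.End R H) : H →ₗ[R] Module.End R H :=
  LinearMap.mul' R (Module.End R H) ∘ₗ TensorProduct.map f g ∘ₗ Coalgebra.comul

/-- The unit `x ↦ ε(x)·id` of the convolution algebra `Hom(H, End(H))`. -/
noncomputable def convUnit : H →ₗ[R] Module.End R H :=
  Algebra.linearMap R (Module.End R H) ∘ₗ Coalgebra.counit

/-- A post-Hopf algebra structure on the Hopf algebra `H`: a coalgebra
homomorphism `▷ : H ⊗ H → H` satisfying
`x ▷ (y·z) = (x₁ ▷ y)·(x₂ ▷ z)`, `x ▷ (y ▷ z) = (x₁·(x₂ ▷ y)) ▷ z`, and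
such that `α : H → End H`, `α_x = x ▷ -`, is convolution invertible. -/
structure PostHopf : Type _ where
  /-- the binary operation `▷` -/
  rhd : H ⊗[R] H →ₗ[R] H
  /-- `▷` is comultiplicative -/
  comul_rhd : Coalgebra.comul ∘ₗ rhd
      = TensorProduct.map rhd rhd ∘ₗ (Coalgebra.comul (R := R) (A := H ⊗[R] H))
  /-- `▷` is counital -/
  counit_rhd : Coalgebra.counit ∘ₗ rhd = (Coalgebra.counit (R := R) (A := H ⊗[R] H))
  /-- `x ▷ (y·z) = (x₁ ▷ y)·(x₂ ▷ z)` -/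
  rhd_mul : ∀ x y z : H,
    rhd (x ⊗ₜ (y * z))
      = LinearMap.mul' R H
          (TensorProduct.map (rhd ∘ₗ (TensorProduct.mk R H H).flip y)
            (rhd ∘ₗ (TensorProduct.mk R H H).flip z) (Coalgebra.comul x))
  /-- `x ▷ (y ▷ z) = (x₁·(x₂ ▷ y)) ▷ z` -/
  rhd_rhd : ∀ x y z : H,
    rhd (x ⊗ₜ rhd (y ⊗ₜ z)) = rhd (subProd R H rhd (x ⊗ₜ y) ⊗ₜ z)
  /-- `α : x ↦ (x ▷ -)` is convolution invertible in `Hom(H, End H)` -/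
  conv_invertible : ∃ β : H →ₗ[R] Module.End R H,
    convEnd R H ((TensorProduct.mk R H H).compr₂ rhd) β = convUnit R H ∧
    convEnd R H β ((TensorProduct.mk R H H).compr₂ rhd) = convUnit R H

/-- Cocommutativity of the coalgebra `H`. -/
def IsCocomm : Prop :=
  ∀ x : H, (TensorProduct.comm R H H) (Coalgebra.comul x) = Coalgebra.comul x

/-- The subadjacent antipode `S▷(x) = β_{x₁}(S(x₂))`, built from a
convolution inverse `β` of the left multiplication. -/
noncomputable def subAntipode (β : H →ₗ[R] Module.End R H) : H →ₗ[R] H :=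
  TensorProduct.lift (β.compl₂ (HopfAlgebra.antipode (R := R) (A := H)))
    ∘ₗ Coalgebra.comul

/-- An element is primitive if `Δ(x) = 1 ⊗ x + x ⊗ 1`. -/
def IsPrimitive (x : H) : Prop :=
  Coalgebra.comul (R := R) x = (1 : H) ⊗ₜ x + x ⊗ₜ (1 : H)

section Aux

variable {R H}

lemma convUnit_apply_one : convUnit R H (1 : H) = 1 := by
  simp [convUnit, Bialgebra.counit_one]

lemma convEnd_unit_right (f : H →ₗ[R] Module.End R H) :
    convEnd R H f (convUnit R H) = f := by
  unfold convEnd convUnit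
  have e1 : TensorProduct.map f ((Algebra.linearMap R (Module.End R H)) ∘ₗ Coalgebra.counit)
      = TensorProduct.map f (Algebra.linearMap R (Module.End R H)) ∘ₗ
        TensorProduct.map (LinearMap.id : H →ₗ[R] H) Coalgebra.counit :=
    TensorProduct.map_comp f (Algebra.linearMap R (Module.End R H)) (LinearMap.id : H →ₗ[R] H) (Coalgebra.counit (R := R) (A := H))
  have e2 : LinearMap.mul' R (Module.End R H) ∘ₗ
      TensorProduct.map f (Algebra.linearMap R (Module.End R H))
      = f ∘ₗ (TensorProduct.rid R H).toLinearMap := by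
    apply TensorProduct.ext'
    intro u r
    simp [Algebra.algebraMap_eq_smul_one, Algebra.mul_smul_comm]
  have e3 : (TensorProduct.map (LinearMap.id (M := H)) Coalgebra.counit) ∘ₗ Coalgebra.comul
      = (TensorProduct.mk R H R).flip 1 :=
    Coalgebra.lTensor_counit_comp_comul (R := R) (A := H)
  calc LinearMap.mul' R (Module.End R H) ∘ₗ
        (TensorProduct.map f (Algebra.linearMap R (Module.End R H) ∘ₗ Coalgebra.counit))
        ∘ₗ Coalgebra.comul
      = (LinearMap.mul' R (Module.End R H) ∘ₗ
          TensorProduct.map f (Algebra.linearMap R (Module.End R H))) ∘ₗ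
          ((TensorProduct.map (LinearMap.id : H →ₗ[R] H) Coalgebra.counit) ∘ₗ Coalgebra.comul) := by
        rw [e1]; rfl
    _ = (f ∘ₗ (TensorProduct.rid R H).toLinearMap) ∘ₗ (TensorProduct.mk R H R).flip 1 := by
        rw [e2, e3]
    _ = f := by
        apply LinearMap.ext; intro x
        simp

lemma convEnd_unit_left (f : H →ₗ[R] Module.End R H) :
    convEnd R H (convUnit R H) f = f := by
  unfold convEnd convUnit
  have e1 : TensorProduct.map ((Algebra.linearMap R (Module.End R H)) ∘ₗ Coalgebra.counit) f
      = TensorProduct.map (Algebra.linearMap R (Module.End R H)) f ∘ₗ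
        TensorProduct.map Coalgebra.counit (LinearMap.id : H →ₗ[R] H) :=
    TensorProduct.map_comp (Algebra.linearMap R (Module.End R H)) f (Coalgebra.counit (R := R) (A := H)) (LinearMap.id : H →ₗ[R] H)
  have e2 : LinearMap.mul' R (Module.End R H) ∘ₗ
      TensorProduct.map (Algebra.linearMap R (Module.End R H)) f
      = f ∘ₗ (TensorProduct.lid R H).toLinearMap := by
    apply TensorProduct.ext'
    intro r u
    simp [Algebra.algebraMap_eq_smul_one, Algebra.smul_mul_assoc]
  have e3 : (TensorProduct.map Coalgebra.counit (LinearMap.id (M := H))) ∘ₗ Coalgebra.comul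
      = TensorProduct.mk R R H 1 :=
    Coalgebra.rTensor_counit_comp_comul (R := R) (A := H)
  calc LinearMap.mul' R (Module.End R H) ∘ₗ
        (TensorProduct.map (Algebra.linearMap R (Module.End R H) ∘ₗ Coalgebra.counit) f)
        ∘ₗ Coalgebra.comul
      = (LinearMap.mul' R (Module.End R H) ∘ₗ
          TensorProduct.map (Algebra.linearMap R (Module.End R H)) f) ∘ₗ
          ((TensorProduct.map Coalgebra.counit (LinearMap.id : H →ₗ[R] H)) ∘ₗ Coalgebra.comul) := by
        rw [e1]; rfl
    _ = (f ∘ₗ (TensorProduct.lid R H).toLinearMap) ∘ₗ TensorProduct.mk R R H 1 := by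
        rw [e2, e3]
    _ = f := by
        apply LinearMap.ext; intro x
        simp

end Aux
section Aux2
variable {R H}

lemma convEnd_assoc (f g h : H →ₗ[R] Module.End R H) :
    convEnd R H (convEnd R H f g) h = convEnd R H f (convEnd R H g h) := by
  have key : LinearMap.mul' R (Module.End R H) ∘ₗ
      TensorProduct.map (LinearMap.mul' R (Module.End R H) ∘ₗ TensorProduct.map f g) h
      = (LinearMap.mul' R (Module.End R H) ∘ₗ
          TensorProduct.map f (LinearMap.mul' R (Module.End R H) ∘ₗ TensorProduct.map g h)) ∘ₗ
        (TensorProduct.assoc R H H H).toLinearMap := by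
    apply TensorProduct.ext_threefold
    intro a b c
    simp [mul_assoc]
  have eL : TensorProduct.map (convEnd R H f g) h
      = TensorProduct.map (LinearMap.mul' R (Module.End R H) ∘ₗ TensorProduct.map f g) h ∘ₗ
        TensorProduct.map (Coalgebra.comul (R := R) (A := H)) (LinearMap.id : H →ₗ[R] H) :=
    TensorProduct.map_comp (LinearMap.mul' R (Module.End R H) ∘ₗ TensorProduct.map f g)
      h (Coalgebra.comul (R := R) (A := H)) (LinearMap.id : H →ₗ[R] H)
  have eR : TensorProduct.map f (convEnd R H g h)
      = TensorProduct.map f (LinearMap.mul' R (Module.End R H) ∘ₗ TensorProduct.map g h) ∘ₗ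
        TensorProduct.map (LinearMap.id : H →ₗ[R] H) (Coalgebra.comul (R := R) (A := H)) :=
    TensorProduct.map_comp f
      (LinearMap.mul' R (Module.End R H) ∘ₗ TensorProduct.map g h) (LinearMap.id : H →ₗ[R] H)
      (Coalgebra.comul (R := R) (A := H))
  have hco : (TensorProduct.assoc R H H H).toLinearMap ∘ₗ
        (TensorProduct.map (Coalgebra.comul (R := R) (A := H)) (LinearMap.id : H →ₗ[R] H)
          ∘ₗ Coalgebra.comul)
      = TensorProduct.map (LinearMap.id : H →ₗ[R] H) (Coalgebra.comul (R := R) (A := H))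
          ∘ₗ Coalgebra.comul := Coalgebra.coassoc
  show LinearMap.mul' R (Module.End R H) ∘ₗ TensorProduct.map (convEnd R H f g) h
        ∘ₗ Coalgebra.comul
      = LinearMap.mul' R (Module.End R H) ∘ₗ TensorProduct.map f (convEnd R H g h)
        ∘ₗ Coalgebra.comul
  rw [eL, eR]
  calc LinearMap.mul' R (Module.End R H) ∘ₗ
        (TensorProduct.map (LinearMap.mul' R (Module.End R H) ∘ₗ TensorProduct.map f g) h ∘ₗ
          TensorProduct.map (Coalgebra.comul (R := R) (A := H)) LinearMap.id) ∘ₗ Coalgebra.comul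
      = (LinearMap.mul' R (Module.End R H) ∘ₗ
          TensorProduct.map (LinearMap.mul' R (Module.End R H) ∘ₗ TensorProduct.map f g) h) ∘ₗ
        (TensorProduct.map (Coalgebra.comul (R := R) (A := H)) LinearMap.id ∘ₗ
          Coalgebra.comul) := rfl
    _ = (LinearMap.mul' R (Module.End R H) ∘ₗ
          TensorProduct.map f (LinearMap.mul' R (Module.End R H) ∘ₗ TensorProduct.map g h)) ∘ₗ
        ((TensorProduct.assoc R H H H).toLinearMap ∘ₗ
          (TensorProduct.map (Coalgebra.comul (R := R) (A := H)) LinearMap.id ∘ₗ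
            Coalgebra.comul)) := by rw [key]; rfl
    _ = (LinearMap.mul' R (Module.End R H) ∘ₗ
          TensorProduct.map f (LinearMap.mul' R (Module.End R H) ∘ₗ TensorProduct.map g h)) ∘ₗ
        (TensorProduct.map (LinearMap.id : H →ₗ[R] H) (Coalgebra.comul (R := R) (A := H)) ∘ₗ
          Coalgebra.comul) := by rw [hco]
    _ = LinearMap.mul' R (Module.End R H) ∘ₗ
        (TensorProduct.map f (LinearMap.mul' R (Module.End R H) ∘ₗ TensorProduct.map g h) ∘ₗ
          TensorProduct.map (LinearMap.id : H →ₗ[R] H) (Coalgebra.comul (R := R) (A := H))) ∘ₗ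
        Coalgebra.comul := rfl

end Aux2
section Aux3
variable {R H}

/-- `α_u ∘ α_v = α_{u *▷ v}` pointwise. -/
lemma alpha_mul (P : PostHopf R H) (u v : H) :
    ((TensorProduct.mk R H H).compr₂ P.rhd) u * ((TensorProduct.mk R H H).compr₂ P.rhd) v
      = ((TensorProduct.mk R H H).compr₂ P.rhd) (subProd R H P.rhd (u ⊗ₜ v)) := by
  apply LinearMap.ext
  intro z
  simpa using P.rhd_rhd u v z

/-- point-free version: `mul ∘ (α ⊗ α) = α ∘ subProd`. -/
lemma alpha_mul' (P : PostHopf R H) :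
    LinearMap.mul' R (Module.End R H) ∘ₗ
      TensorProduct.map ((TensorProduct.mk R H H).compr₂ P.rhd)
        ((TensorProduct.mk R H H).compr₂ P.rhd)
      = ((TensorProduct.mk R H H).compr₂ P.rhd) ∘ₗ subProd R H P.rhd := by
  apply TensorProduct.ext'
  intro u v
  simpa using alpha_mul P u v

lemma rhd_one_one (P : PostHopf R H) : P.rhd ((1 : H) ⊗ₜ (1 : H)) = 1 := by
  set e := P.rhd ((1 : H) ⊗ₜ (1 : H)) with he
  have he2 : e * e = e := by
    have := P.rhd_mul 1 1 1
    rw [mul_one, Bialgebra.comul_one] at this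
    simpa [Algebra.TensorProduct.one_def] using this.symm
  have hΔ : Coalgebra.comul (R := R) e = e ⊗ₜ e := by
    have := LinearMap.congr_fun P.comul_rhd ((1 : H) ⊗ₜ (1 : H))
    simpa [Bialgebra.comul_one, Algebra.TensorProduct.one_def,
      AlgebraTensorModule.tensorTensorTensorComm_tmul] using this
  have hS : HopfAlgebra.antipode (R := R) e * e = 1 := by
    have := HopfAlgebra.mul_antipode_rTensor_comul_apply (R := R) e
    rw [hΔ] at this
    have hε : Coalgebra.counit (R := R) e = 1 := by
      have := LinearMap.congr_fun P.counit_rhd ((1 : H) ⊗ₜ (1 : H))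
      simpa [Bialgebra.counit_one] using this
    simpa [hε] using this
  calc e = 1 * e := (one_mul e).symm
    _ = (HopfAlgebra.antipode (R := R) e * e) * e := by rw [hS]
    _ = HopfAlgebra.antipode (R := R) e * (e * e) := mul_assoc _ _ _
    _ = HopfAlgebra.antipode (R := R) e * e := by rw [he2]
    _ = 1 := hS

lemma subProd_one_one (P : PostHopf R H) : subProd R H P.rhd ((1 : H) ⊗ₜ (1 : H)) = 1 := by
  simp [subProd, Bialgebra.comul_one, Algebra.TensorProduct.one_def, rhd_one_one P]

lemma alpha_one (P : PostHopf R H) (β : H →ₗ[R] Module.End R H)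
    (hβ₁ : convEnd R H ((TensorProduct.mk R H H).compr₂ P.rhd) β = convUnit R H) :
    ((TensorProduct.mk R H H).compr₂ P.rhd) (1 : H) = 1 := by
  set α := (TensorProduct.mk R H H).compr₂ P.rhd with hα
  have h1 : α 1 * β 1 = 1 := by
    have := LinearMap.congr_fun hβ₁ (1 : H)
    rw [convUnit_apply_one] at this
    rw [← this]
    simp [convEnd, Bialgebra.comul_one, Algebra.TensorProduct.one_def]
  have h2 : α 1 * α 1 = α 1 := by
    have := alpha_mul P (1 : H) 1
    rwa [subProd_one_one P] at this
  calc α 1 = α 1 * (α 1 * β 1) := by rw [h1, mul_one]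
    _ = (α 1 * α 1) * β 1 := (mul_assoc _ _ _).symm
    _ = α 1 * β 1 := by rw [h2]
    _ = 1 := h1

end Aux3
section Aux4
variable {R H}

/-- key: `x₁ ▷ S▷(x₂) = S(x)` -/
lemma rhd_lTensor_subAntipode (P : PostHopf R H) (β : H →ₗ[R] Module.End R H)
    (hβ₁ : convEnd R H ((TensorProduct.mk R H H).compr₂ P.rhd) β = convUnit R H) :
    P.rhd ∘ₗ TensorProduct.map (LinearMap.id : H →ₗ[R] H) (subAntipode R H β)
        ∘ₗ Coalgebra.comul
      = HopfAlgebra.antipode (R := R) (A := H) := by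
  set α := (TensorProduct.mk R H H).compr₂ P.rhd with hα
  set S := HopfAlgebra.antipode (R := R) (A := H) with hS
  set B := TensorProduct.lift (β.compl₂ S) with hB
  set ψ := LinearMap.mul' R (Module.End R H) ∘ₗ TensorProduct.map α β with hψ
  have hD : P.rhd ∘ₗ TensorProduct.map (LinearMap.id : H →ₗ[R] H) B ∘ₗ
        (TensorProduct.assoc R H H H).toLinearMap
      = TensorProduct.lift (ψ.compl₂ S) := by
    apply TensorProduct.ext_threefold
    intro a b c
    simp [hψ, hB, hα, Module.End.mul_apply]
  have e0 : TensorProduct.map (LinearMap.id : H →ₗ[R] H) (subAntipode R H β)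
      = TensorProduct.map (LinearMap.id : H →ₗ[R] H) B ∘ₗ
        TensorProduct.map (LinearMap.id : H →ₗ[R] H) (Coalgebra.comul (R := R) (A := H)) :=
    TensorProduct.map_comp (LinearMap.id : H →ₗ[R] H) B (LinearMap.id : H →ₗ[R] H)
      (Coalgebra.comul (R := R) (A := H))
  have hco : (TensorProduct.assoc R H H H).toLinearMap ∘ₗ
        (TensorProduct.map (Coalgebra.comul (R := R) (A := H)) (LinearMap.id : H →ₗ[R] H)
          ∘ₗ Coalgebra.comul)
      = TensorProduct.map (LinearMap.id : H →ₗ[R] H) (Coalgebra.comul (R := R) (A := H))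
          ∘ₗ Coalgebra.comul := Coalgebra.coassoc
  have e1 : TensorProduct.lift (ψ.compl₂ S) ∘ₗ
        TensorProduct.map (Coalgebra.comul (R := R) (A := H)) (LinearMap.id : H →ₗ[R] H)
      = TensorProduct.lift ((convEnd R H α β).compl₂ S) := by
    rw [TensorProduct.lift_comp_map]
    congr 1
  have e5 : TensorProduct.lift ((convUnit R H).compl₂ S)
      = S ∘ₗ (TensorProduct.lid R H).toLinearMap ∘ₗ
          TensorProduct.map (Coalgebra.counit (R := R) (A := H)) (LinearMap.id : H →ₗ[R] H) := by
    apply TensorProduct.ext'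
    intro u c
    simp [convUnit, Module.algebraMap_end_apply]
  have e6 : (TensorProduct.map (Coalgebra.counit (R := R) (A := H))
        (LinearMap.id : H →ₗ[R] H)) ∘ₗ Coalgebra.comul = TensorProduct.mk R R H 1 :=
    Coalgebra.rTensor_counit_comp_comul (R := R) (A := H)
  calc P.rhd ∘ₗ TensorProduct.map (LinearMap.id : H →ₗ[R] H) (subAntipode R H β)
        ∘ₗ Coalgebra.comul
      = (P.rhd ∘ₗ TensorProduct.map (LinearMap.id : H →ₗ[R] H) B) ∘ₗ
        (TensorProduct.map (LinearMap.id : H →ₗ[R] H) (Coalgebra.comul (R := R) (A := H))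
          ∘ₗ Coalgebra.comul) := by rw [e0]; rfl
    _ = (P.rhd ∘ₗ TensorProduct.map (LinearMap.id : H →ₗ[R] H) B) ∘ₗ
        ((TensorProduct.assoc R H H H).toLinearMap ∘ₗ
          (TensorProduct.map (Coalgebra.comul (R := R) (A := H)) (LinearMap.id : H →ₗ[R] H)
            ∘ₗ Coalgebra.comul)) := by rw [hco]
    _ = (TensorProduct.lift (ψ.compl₂ S) ∘ₗ
          TensorProduct.map (Coalgebra.comul (R := R) (A := H)) (LinearMap.id : H →ₗ[R] H))
        ∘ₗ Coalgebra.comul := by rw [← hD]; rfl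
    _ = TensorProduct.lift ((convEnd R H α β).compl₂ S) ∘ₗ Coalgebra.comul := by rw [e1]
    _ = TensorProduct.lift ((convUnit R H).compl₂ S) ∘ₗ Coalgebra.comul := by rw [hβ₁]
    _ = S ∘ₗ (TensorProduct.lid R H).toLinearMap ∘ₗ
        ((TensorProduct.map (Coalgebra.counit (R := R) (A := H)) (LinearMap.id : H →ₗ[R] H))
          ∘ₗ Coalgebra.comul) := by rw [e5]; rfl
    _ = S ∘ₗ (TensorProduct.lid R H).toLinearMap ∘ₗ TensorProduct.mk R R H 1 := by rw [e6]
    _ = S := by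
        apply LinearMap.ext; intro x
        simp

end Aux4
section Aux5
variable {R H}

/-- `x₁ · (x₂ ▷ S▷(x₃)) = ε(x)·1`, i.e. `x₁ *▷ S▷(x₂) = ε(x)1`. -/
lemma subProd_subAntipode (P : PostHopf R H) (β : H →ₗ[R] Module.End R H)
    (hβ₁ : convEnd R H ((TensorProduct.mk R H H).compr₂ P.rhd) β = convUnit R H) :
    subProd R H P.rhd ∘ₗ TensorProduct.map (LinearMap.id : H →ₗ[R] H) (subAntipode R H β)
        ∘ₗ Coalgebra.comul
      = Algebra.linearMap R H ∘ₗ Coalgebra.counit := by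
  set Sd := subAntipode R H β with hSd
  have A1 : TensorProduct.map (Coalgebra.comul (R := R) (A := H)) (LinearMap.id : H →ₗ[R] H)
        ∘ₗ TensorProduct.map (LinearMap.id : H →ₗ[R] H) Sd
      = TensorProduct.map (Coalgebra.comul (R := R) (A := H)) Sd :=
    (TensorProduct.map_comp (Coalgebra.comul (R := R) (A := H)) (LinearMap.id : H →ₗ[R] H)
      (LinearMap.id : H →ₗ[R] H) Sd).symm
  have A2 : TensorProduct.map (Coalgebra.comul (R := R) (A := H)) Sd
      = TensorProduct.map (LinearMap.id : H ⊗[R] H →ₗ[R] H ⊗[R] H) Sd ∘ₗ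
        TensorProduct.map (Coalgebra.comul (R := R) (A := H)) (LinearMap.id : H →ₗ[R] H) :=
    TensorProduct.map_comp (LinearMap.id : H ⊗[R] H →ₗ[R] H ⊗[R] H)
      Sd (Coalgebra.comul (R := R) (A := H)) (LinearMap.id : H →ₗ[R] H)
  have f2 : (TensorProduct.assoc R H H H).toLinearMap ∘ₗ
        TensorProduct.map (LinearMap.id : H ⊗[R] H →ₗ[R] H ⊗[R] H) Sd
      = TensorProduct.map (LinearMap.id : H →ₗ[R] H)
          (TensorProduct.map (LinearMap.id : H →ₗ[R] H) Sd) ∘ₗ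
        (TensorProduct.assoc R H H H).toLinearMap := by
    have := TensorProduct.map_map_comp_assoc_eq (LinearMap.id : H →ₗ[R] H)
      (LinearMap.id : H →ₗ[R] H) Sd
    rw [TensorProduct.map_id] at this
    exact this.symm
  have hco : (TensorProduct.assoc R H H H).toLinearMap ∘ₗ
        (TensorProduct.map (Coalgebra.comul (R := R) (A := H)) (LinearMap.id : H →ₗ[R] H)
          ∘ₗ Coalgebra.comul)
      = TensorProduct.map (LinearMap.id : H →ₗ[R] H) (Coalgebra.comul (R := R) (A := H))
          ∘ₗ Coalgebra.comul := Coalgebra.coassoc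
  have f5 : (TensorProduct.map (LinearMap.id : H →ₗ[R] H) P.rhd ∘ₗ
        TensorProduct.map (LinearMap.id : H →ₗ[R] H)
          (TensorProduct.map (LinearMap.id : H →ₗ[R] H) Sd)) ∘ₗ
        TensorProduct.map (LinearMap.id : H →ₗ[R] H) (Coalgebra.comul (R := R) (A := H))
      = TensorProduct.map (LinearMap.id : H →ₗ[R] H)
          (HopfAlgebra.antipode (R := R) (A := H)) := by
    have f51 : TensorProduct.map (LinearMap.id : H →ₗ[R] H) P.rhd ∘ₗ
          TensorProduct.map (LinearMap.id : H →ₗ[R] H)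
            (TensorProduct.map (LinearMap.id : H →ₗ[R] H) Sd)
        = TensorProduct.map (LinearMap.id : H →ₗ[R] H)
            (P.rhd ∘ₗ TensorProduct.map (LinearMap.id : H →ₗ[R] H) Sd) :=
      (TensorProduct.map_comp (LinearMap.id : H →ₗ[R] H) P.rhd (LinearMap.id : H →ₗ[R] H)
        (TensorProduct.map (LinearMap.id : H →ₗ[R] H) Sd)).symm
    have f52 : TensorProduct.map (LinearMap.id : H →ₗ[R] H)
          (P.rhd ∘ₗ TensorProduct.map (LinearMap.id : H →ₗ[R] H) Sd) ∘ₗ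
          TensorProduct.map (LinearMap.id : H →ₗ[R] H) (Coalgebra.comul (R := R) (A := H))
        = TensorProduct.map (LinearMap.id : H →ₗ[R] H)
            (P.rhd ∘ₗ TensorProduct.map (LinearMap.id : H →ₗ[R] H) Sd
              ∘ₗ Coalgebra.comul) :=
      (TensorProduct.map_comp (LinearMap.id : H →ₗ[R] H)
        (P.rhd ∘ₗ TensorProduct.map (LinearMap.id : H →ₗ[R] H) Sd) (LinearMap.id : H →ₗ[R] H)
        (Coalgebra.comul (R := R) (A := H))).symm
    rw [f51, f52, hSd, rhd_lTensor_subAntipode P β hβ₁]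
  calc subProd R H P.rhd ∘ₗ TensorProduct.map (LinearMap.id : H →ₗ[R] H) Sd
        ∘ₗ Coalgebra.comul
      = (LinearMap.mul' R H ∘ₗ TensorProduct.map (LinearMap.id : H →ₗ[R] H) P.rhd ∘ₗ
          (TensorProduct.assoc R H H H).toLinearMap) ∘ₗ
        ((TensorProduct.map (Coalgebra.comul (R := R) (A := H)) (LinearMap.id : H →ₗ[R] H)
            ∘ₗ TensorProduct.map (LinearMap.id : H →ₗ[R] H) Sd) ∘ₗ Coalgebra.comul) := rfl
    _ = (LinearMap.mul' R H ∘ₗ TensorProduct.map (LinearMap.id : H →ₗ[R] H) P.rhd ∘ₗ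
          (TensorProduct.assoc R H H H).toLinearMap) ∘ₗ
        ((TensorProduct.map (LinearMap.id : H ⊗[R] H →ₗ[R] H ⊗[R] H) Sd ∘ₗ
            TensorProduct.map (Coalgebra.comul (R := R) (A := H))
              (LinearMap.id : H →ₗ[R] H)) ∘ₗ Coalgebra.comul) := by rw [A1, A2]
    _ = (LinearMap.mul' R H ∘ₗ TensorProduct.map (LinearMap.id : H →ₗ[R] H) P.rhd) ∘ₗ
        ((TensorProduct.assoc R H H H).toLinearMap ∘ₗ
          TensorProduct.map (LinearMap.id : H ⊗[R] H →ₗ[R] H ⊗[R] H) Sd) ∘ₗ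
        (TensorProduct.map (Coalgebra.comul (R := R) (A := H)) (LinearMap.id : H →ₗ[R] H)
          ∘ₗ Coalgebra.comul) := rfl
    _ = (LinearMap.mul' R H ∘ₗ TensorProduct.map (LinearMap.id : H →ₗ[R] H) P.rhd) ∘ₗ
        (TensorProduct.map (LinearMap.id : H →ₗ[R] H)
            (TensorProduct.map (LinearMap.id : H →ₗ[R] H) Sd) ∘ₗ
          (TensorProduct.assoc R H H H).toLinearMap) ∘ₗ
        (TensorProduct.map (Coalgebra.comul (R := R) (A := H)) (LinearMap.id : H →ₗ[R] H)
          ∘ₗ Coalgebra.comul) := by rw [f2]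
    _ = (LinearMap.mul' R H) ∘ₗ
        ((TensorProduct.map (LinearMap.id : H →ₗ[R] H) P.rhd ∘ₗ
          TensorProduct.map (LinearMap.id : H →ₗ[R] H)
            (TensorProduct.map (LinearMap.id : H →ₗ[R] H) Sd))) ∘ₗ
        ((TensorProduct.assoc R H H H).toLinearMap ∘ₗ
          (TensorProduct.map (Coalgebra.comul (R := R) (A := H)) (LinearMap.id : H →ₗ[R] H)
            ∘ₗ Coalgebra.comul)) := rfl
    _ = (LinearMap.mul' R H) ∘ₗ
        ((TensorProduct.map (LinearMap.id : H →ₗ[R] H) P.rhd ∘ₗ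
          TensorProduct.map (LinearMap.id : H →ₗ[R] H)
            (TensorProduct.map (LinearMap.id : H →ₗ[R] H) Sd))) ∘ₗ
        (TensorProduct.map (LinearMap.id : H →ₗ[R] H) (Coalgebra.comul (R := R) (A := H))
          ∘ₗ Coalgebra.comul) := by rw [hco]
    _ = (LinearMap.mul' R H) ∘ₗ
        ((TensorProduct.map (LinearMap.id : H →ₗ[R] H) P.rhd ∘ₗ
          TensorProduct.map (LinearMap.id : H →ₗ[R] H)
            (TensorProduct.map (LinearMap.id : H →ₗ[R] H) Sd)) ∘ₗ
          TensorProduct.map (LinearMap.id : H →ₗ[R] H) (Coalgebra.comul (R := R) (A := H)))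
          ∘ₗ Coalgebra.comul := rfl
    _ = LinearMap.mul' R H ∘ₗ
        TensorProduct.map (LinearMap.id : H →ₗ[R] H)
          (HopfAlgebra.antipode (R := R) (A := H)) ∘ₗ Coalgebra.comul := by rw [f5]
    _ = Algebra.linearMap R H ∘ₗ Coalgebra.counit :=
        HopfAlgebra.mul_antipode_lTensor_comul (R := R) (A := H)

/-- Step 1: `α ⋆ (α ∘ S▷) = ηε`. -/
lemma conv_alpha_gamma (P : PostHopf R H) (β : H →ₗ[R] Module.End R H)
    (hβ₁ : convEnd R H ((TensorProduct.mk R H H).compr₂ P.rhd) β = convUnit R H) :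
    convEnd R H ((TensorProduct.mk R H H).compr₂ P.rhd)
        (((TensorProduct.mk R H H).compr₂ P.rhd) ∘ₗ subAntipode R H β)
      = convUnit R H := by
  set α := (TensorProduct.mk R H H).compr₂ P.rhd with hα
  have e1 : TensorProduct.map α (α ∘ₗ subAntipode R H β)
      = TensorProduct.map α α ∘ₗ
        TensorProduct.map (LinearMap.id : H →ₗ[R] H) (subAntipode R H β) :=
    TensorProduct.map_comp α α (LinearMap.id : H →ₗ[R] H) (subAntipode R H β)
  have e2 : α ∘ₗ Algebra.linearMap R H = Algebra.linearMap R (Module.End R H) := by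
    apply LinearMap.ext
    intro r
    simp only [LinearMap.comp_apply, Algebra.linearMap_apply, Algebra.algebraMap_eq_smul_one,
      map_smul]
    rw [hα, alpha_one P β hβ₁]
  calc convEnd R H α (α ∘ₗ subAntipode R H β)
      = (LinearMap.mul' R (Module.End R H) ∘ₗ TensorProduct.map α α) ∘ₗ
        (TensorProduct.map (LinearMap.id : H →ₗ[R] H) (subAntipode R H β)
          ∘ₗ Coalgebra.comul) := by
        show LinearMap.mul' R (Module.End R H) ∘ₗ TensorProduct.map α (α ∘ₗ subAntipode R H β)
            ∘ₗ Coalgebra.comul = _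
        rw [e1]; rfl
    _ = (α ∘ₗ subProd R H P.rhd) ∘ₗ
        (TensorProduct.map (LinearMap.id : H →ₗ[R] H) (subAntipode R H β)
          ∘ₗ Coalgebra.comul) := by rw [alpha_mul' P]
    _ = α ∘ₗ (subProd R H P.rhd ∘ₗ
        TensorProduct.map (LinearMap.id : H →ₗ[R] H) (subAntipode R H β)
          ∘ₗ Coalgebra.comul) := rfl
    _ = α ∘ₗ (Algebra.linearMap R H ∘ₗ Coalgebra.counit) := by
        rw [subProd_subAntipode P β hβ₁]
    _ = convUnit R H := by
        show (α ∘ₗ Algebra.linearMap R H) ∘ₗ Coalgebra.counit = _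
        rw [e2]; rfl

end Aux5
/-- In a cocommutative post-Hopf algebra, the subadjacent antipode satisfies
the recursion `S▷(x) = S▷(x₁) ▷ S(x₂)`. -/
theorem subAntipode_recursion (P : PostHopf R H) (hcop : _root_.IsCocomm R H)
    (β : H →ₗ[R] Module.End R H)
    (hβ₁ : convEnd R H ((TensorProduct.mk R H H).compr₂ P.rhd) β = convUnit R H)
    (hβ₂ : convEnd R H β ((TensorProduct.mk R H H).compr₂ P.rhd) = convUnit R H)
    (x : H) :
    subAntipode R H β x
      = P.rhd (TensorProduct.map (subAntipode R H β)
          (HopfAlgebra.antipode (R := R) (A := H)) (Coalgebra.comul x)) := by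
  set α := (TensorProduct.mk R H H).compr₂ P.rhd with hα
  set γ := α ∘ₗ subAntipode R H β with hγ
  have h1 : convEnd R H α γ = convUnit R H := conv_alpha_gamma P β hβ₁
  have hβγ : β = γ := by
    calc β = convEnd R H β (convUnit R H) := (convEnd_unit_right β).symm
      _ = convEnd R H β (convEnd R H α γ) := by rw [h1]
      _ = convEnd R H (convEnd R H β α) γ := (convEnd_assoc β α γ).symm
      _ = convEnd R H (convUnit R H) γ := by rw [hβ₂]
      _ = γ := convEnd_unit_left γ
  have key : TensorProduct.lift (γ.compl₂ (HopfAlgebra.antipode (R := R) (A := H)))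
      = P.rhd ∘ₗ TensorProduct.map (subAntipode R H β)
          (HopfAlgebra.antipode (R := R) (A := H)) := by
    apply TensorProduct.ext'
    intro a b
    simp [hγ, hα]
  calc subAntipode R H β x
      = TensorProduct.lift (β.compl₂ (HopfAlgebra.antipode (R := R) (A := H)))
          (Coalgebra.comul x) := rfl
    _ = TensorProduct.lift (γ.compl₂ (HopfAlgebra.antipode (R := R) (A := H)))
          (Coalgebra.comul x) := by rw [hβγ]
    _ = (P.rhd ∘ₗ TensorProduct.map (subAntipode R H β)
          (HopfAlgebra.antipode (R := R) (A := H))) (Coalgebra.comul x) := by rw [key]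
    _ = P.rhd (TensorProduct.map (subAntipode R H β)
          (HopfAlgebra.antipode (R := R) (A := H)) (Coalgebra.comul x)) := rfl
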